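/- (Proposition 3, full NE statement for the static ST game.) Let N be a positive integer, let R_A, R_E, R_{A,E} be N×N complex matrices with R_A Hermitian positive semidefinite with largest eigenvalue λ_max(R_A), let R_A^D ≥ 0, R_E^D, C_E, T_s > 0, B > 0, w_d ≥ 0, w_k ≥ 0 be real constants, and let Re(·) denote real part. For v ∈ ℂ^N define z(v) = Re(v^H R_A v) + R_A^D, Alice's utility u_A(v, κ) for κ = 0 as u_A(v, 0) = w_d · B · log₂(1 + z(v)) + (w_k / T_s) · log₂( (1 + z(v))² / (1 + 2 z(v)) ), and Eve's utility u_E(v, κ) = κ · (g_E(v) − C_E) for κ ∈ {0, 1}, where g_E(v) is any real-valued function (the leaked key rate at Eve). Suppose v* ∈ ℂ^N satisfies Re(v*^H R_A v*) = N · λ_max(R_A) and C_E ≥ g_E(v*). Then (v*, 0) is a pure-strategy Nash equilibrium in the sense that u_A(v*, 0) ≥ u_A(v, 0) for every v ∈ ℂ^N with v^H v = N, and u_E(v*, 0) ≥ u_E(v*, κ) for every κ ∈ {0, 1}. -/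

import Mathlib

open Matrix
open scoped ComplexOrder

lemma rayleigh_aux {N : ℕ} (hN : 0 < N) (A : Matrix (Fin N) (Fin N) ℂ)
    (hA : A.IsHermitian) (v : Fin N → ℂ) :
    (star v ⬝ᵥ (A *ᵥ v)).re ≤ (⨆ i, hA.eigenvalues i) * (star v ⬝ᵥ v).re := by
  haveI : Nonempty (Fin N) := ⟨⟨0, hN⟩⟩
  set U : Matrix (Fin N) (Fin N) ℂ := (hA.eigenvectorUnitary : Matrix (Fin N) (Fin N) ℂ) with hU
  set w : Fin N → ℂ := star U *ᵥ v with hw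
  have hsw : star w = star v ᵥ* U := by
    rw [hw, star_mulVec]
    simp [Matrix.star_eq_conjTranspose]
  have h1 : star v ⬝ᵥ (A *ᵥ v) =
      star w ⬝ᵥ (diagonal (RCLike.ofReal ∘ hA.eigenvalues) *ᵥ w) := by
    conv_lhs => rw [hA.spectral_theorem, Unitary.conjStarAlgAut_apply]
    rw [← hU, ← mulVec_mulVec, ← mulVec_mulVec, dotProduct_mulVec, ← hsw, ← hw]
  have h2 : star w ⬝ᵥ w = star v ⬝ᵥ v := by
    rw [hsw, hw, ← dotProduct_mulVec, mulVec_mulVec,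
      (Matrix.mem_unitaryGroup_iff).mp hA.eigenvectorUnitary.2, one_mulVec]
  have h3 : (star v ⬝ᵥ (A *ᵥ v)).re = ∑ i, hA.eigenvalues i * Complex.normSq (w i) := by
    rw [h1]
    simp only [dotProduct, mulVec_diagonal, Complex.re_sum]
    congr 1; ext i
    simp only [Pi.star_apply, Function.comp_apply]
    have hco : (RCLike.ofReal (hA.eigenvalues i) : ℂ) = ((hA.eigenvalues i : ℝ) : ℂ) := rfl
    rw [hco]
    have heq : (star (w i)) * ((hA.eigenvalues i : ℂ) * w i)
        = (hA.eigenvalues i : ℂ) * (Complex.normSq (w i) : ℂ) := by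
      rw [Complex.normSq_eq_conj_mul_self, Complex.star_def]
      ring
    rw [heq, ← Complex.ofReal_mul, Complex.ofReal_re]
  have h4 : (star v ⬝ᵥ v).re = ∑ i, Complex.normSq (w i) := by
    rw [← h2]
    simp only [dotProduct, Complex.re_sum]
    congr 1; ext i
    simp [Complex.mul_re, Complex.normSq_apply, mul_comm]
  rw [h3, h4, Finset.mul_sum]
  apply Finset.sum_le_sum
  intro i _
  have hle : hA.eigenvalues i ≤ ⨆ j, hA.eigenvalues j :=
    le_ciSup (Set.Finite.bddAbove (Set.finite_range _)) i
  exact mul_le_mul_of_nonneg_right hle (Complex.normSq_nonneg _)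

lemma mono_aux {a b wd wk B Ts : ℝ} (ha : 0 ≤ a) (hab : a ≤ b)
    (hwd : 0 ≤ wd) (hwk : 0 ≤ wk) (hB : 0 < B) (hTs : 0 < Ts) :
    wd * B * Real.logb 2 (1 + a) + (wk / Ts) * Real.logb 2 ((1 + a) ^ 2 / (1 + 2 * a)) ≤
    wd * B * Real.logb 2 (1 + b) + (wk / Ts) * Real.logb 2 ((1 + b) ^ 2 / (1 + 2 * b)) := by
  have hb : 0 ≤ b := ha.trans hab
  have h1a : (0:ℝ) < 1 + a := by linarith
  have h1b : (0:ℝ) < 1 + b := by linarith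
  have h2a : (0:ℝ) < 1 + 2 * a := by linarith
  have h2b : (0:ℝ) < 1 + 2 * b := by linarith
  have t1 : Real.logb 2 (1 + a) ≤ Real.logb 2 (1 + b) :=
    Real.logb_le_logb_of_le one_lt_two h1a (by linarith)
  have t2 : Real.logb 2 ((1 + a) ^ 2 / (1 + 2 * a)) ≤
      Real.logb 2 ((1 + b) ^ 2 / (1 + 2 * b)) := by
    apply Real.logb_le_logb_of_le one_lt_two (by positivity)
    rw [div_le_div_iff₀ h2a h2b]
    nlinarith [mul_nonneg (sub_nonneg.2 hab) (mul_nonneg ha hb),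
      mul_nonneg (sub_nonneg.2 hab) (add_nonneg ha hb)]
  have c1 : 0 ≤ wd * B := by positivity
  have c2 : 0 ≤ wk / Ts := by positivity
  exact add_le_add (mul_le_mul_of_nonneg_left t1 c1) (mul_le_mul_of_nonneg_left t2 c2)

/-- Proposition 3, full NE statement for the static ST game:
if `Re(v*^H R_A v*) = N·λ_max(R_A)` and `C_E ≥ g_E(v*)`, then `(v*, 0)` is a
pure-strategy Nash equilibrium: `v*` maximizes Alice's utility
`u_A(v, 0) = w_d B log₂(1+z(v)) + (w_k/T_s) log₂((1+z(v))²/(1+2z(v)))` over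
`{v : v^H v = N}`, and `κ = 0` maximizes Eve's utility `u_E(v*, κ) = κ(g_E(v*) − C_E)`
over `κ ∈ {0, 1}`. -/
theorem stmt_11 (N : ℕ) (hN : 0 < N)
    (RA RE RAE : Matrix (Fin N) (Fin N) ℂ) (hRA : RA.PosSemidef)
    (RAD : ℝ) (hRAD : 0 ≤ RAD) (RED CE : ℝ)
    (wd wk B Ts : ℝ) (hwd : 0 ≤ wd) (hwk : 0 ≤ wk) (hB : 0 < B) (hTs : 0 < Ts)
    (z : (Fin N → ℂ) → ℝ) (hz : ∀ v, z v = (star v ⬝ᵥ (RA *ᵥ v)).re + RAD)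
    (uA : (Fin N → ℂ) → ℝ → ℝ)
    (huA : ∀ v, uA v 0 = wd * B * Real.logb 2 (1 + z v) +
      (wk / Ts) * Real.logb 2 ((1 + z v) ^ 2 / (1 + 2 * z v)))
    (gE : (Fin N → ℂ) → ℝ)
    (uE : (Fin N → ℂ) → ℝ → ℝ)
    (huE : ∀ v, ∀ κ ∈ ({0, 1} : Set ℝ), uE v κ = κ * (gE v - CE))
    (vstar : Fin N → ℂ)
    (hvstar : (star vstar ⬝ᵥ (RA *ᵥ vstar)).re =
      (N : ℝ) * ⨆ i : Fin N, hRA.isHermitian.eigenvalues i)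
    (hCE : gE vstar ≤ CE) :
    (∀ v : Fin N → ℂ, star v ⬝ᵥ v = (N : ℂ) → uA v 0 ≤ uA vstar 0) ∧
      (∀ κ ∈ ({0, 1} : Set ℝ), uE vstar κ ≤ uE vstar 0) := by
  constructor
  · intro v hv
    have hray := rayleigh_aux hN RA hRA.isHermitian v
    rw [hv] at hray
    simp only [Complex.natCast_re] at hray
    have hzle : z v ≤ z vstar := by
      rw [hz, hz, hvstar]
      have : (star v ⬝ᵥ (RA *ᵥ v)).re ≤ (N : ℝ) * ⨆ i, hRA.isHermitian.eigenvalues i := by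
        calc (star v ⬝ᵥ (RA *ᵥ v)).re ≤ (⨆ i, hRA.isHermitian.eigenvalues i) * (N : ℝ) := hray
        _ = (N : ℝ) * ⨆ i, hRA.isHermitian.eigenvalues i := mul_comm _ _
      linarith
    have hz0 : 0 ≤ z v := by
      rw [hz]
      exact add_nonneg (hRA.re_dotProduct_nonneg v) hRAD
    rw [huA, huA]
    exact mono_aux hz0 hzle hwd hwk hB hTs
  · intro κ hκ
    have h0 : (0:ℝ) ∈ ({0, 1} : Set ℝ) := by simp
    rw [huE vstar κ hκ, huE vstar 0 h0]
    rcases hκ with h | h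
    · rw [h]
    · rw [h]; nlinarith
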